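/- Let G be a finite group with generating set S acting unitarily and irreducibly on V = ℂⁿ via ρ, and suppose κ > 0 is such that for every traceless operator 0 ≠ T ∈ 𝔰𝔩ₙ(ℂ) there exists s ∈ S with ‖ρ(s)Tρ(s)⁻¹ - T‖ ≥ κ‖T‖ (Hilbert–Schmidt norm). Then for every subspace W ≤ V with dim W ≤ n/2, dim(W + Σ_{s∈S} ρ(s)W) ≥ (1 + κ²/12)·dim W. -/

import Mathlib

open Module Matrix

noncomputable section ProjAux

variable {n : ℕ}

/-- The identification of `Fin n → ℂ` with Euclidean space. -/
abbrev dimExpEqv (n : ℕ) : (Fin n → ℂ) ≃ₗ[ℂ] EuclideanSpace ℂ (Fin n) :=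
  (WithLp.linearEquiv 2 ℂ (Fin n → ℂ)).symm

/-- The orthogonal projection matrix onto a subspace `W` of `ℂⁿ`. -/
noncomputable def projMat (W : Submodule ℂ (Fin n → ℂ)) : Matrix (Fin n) (Fin n) ℂ :=
  LinearMap.toMatrix' ((dimExpEqv n).symm.toLinearMap ∘ₗ
    ((((W.map (dimExpEqv n).toLinearMap).subtypeL.comp
        (Submodule.orthogonalProjectionOnto (W.map (dimExpEqv n).toLinearMap))) : _ →L[ℂ] _) : _ →ₗ[ℂ] _) ∘ₗ
      (dimExpEqv n).toLinearMap)

lemma projMat_mulVec (W : Submodule ℂ (Fin n → ℂ)) (x : Fin n → ℂ) :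
    projMat W *ᵥ x = (dimExpEqv n).symm
      (↑(Submodule.orthogonalProjectionOnto (W.map (dimExpEqv n).toLinearMap) ((dimExpEqv n) x))) := by
  rw [projMat, ← Matrix.toLin'_apply, Matrix.toLin'_toMatrix']
  rfl

lemma projMat_mem (W : Submodule ℂ (Fin n → ℂ)) (x : Fin n → ℂ) :
    projMat W *ᵥ x ∈ W := by
  rw [projMat_mulVec]
  have h := (Submodule.orthogonalProjectionOnto (W.map (dimExpEqv n).toLinearMap) ((dimExpEqv n) x)).2
  obtain ⟨w, hw, hw'⟩ := h
  rw [← hw']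
  simpa using hw

lemma projMat_fix (W : Submodule ℂ (Fin n → ℂ)) {x : Fin n → ℂ} (hx : x ∈ W) :
    projMat W *ᵥ x = x := by
  rw [projMat_mulVec]
  have hmem : (dimExpEqv n) x ∈ W.map (dimExpEqv n).toLinearMap := ⟨x, hx, rfl⟩
  rw [Submodule.coe_orthogonalProjectionOnto_apply, Submodule.starProjection_eq_self_iff.mpr hmem]
  simp

lemma projMat_isProj (W : Submodule ℂ (Fin n → ℂ)) :
    LinearMap.IsProj W (projMat W).mulVecLin :=
  ⟨fun x => by simpa using projMat_mem W x, fun x hx => by simpa using projMat_fix W hx⟩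

lemma matrix_eq_of_mulVec {M N : Matrix (Fin n) (Fin n) ℂ}
    (h : ∀ x, M *ᵥ x = N *ᵥ x) : M = N := by
  ext i j
  have := congrFun (h (Pi.single j 1)) i
  simpa [Matrix.mulVec_single] using this

lemma projMat_idem (W : Submodule ℂ (Fin n → ℂ)) : projMat W * projMat W = projMat W :=
  matrix_eq_of_mulVec fun x => by
    rw [← Matrix.mulVec_mulVec]
    exact projMat_fix W (projMat_mem W x)

lemma projMat_mul_of_le {U W : Submodule ℂ (Fin n → ℂ)} (h : U ≤ W) :
    projMat W * projMat U = projMat U :=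
  matrix_eq_of_mulVec fun x => by
    rw [← Matrix.mulVec_mulVec]
    exact projMat_fix W (h (projMat_mem U x))

lemma projMat_herm (W : Submodule ℂ (Fin n → ℂ)) : (projMat W)ᴴ = projMat W := by
  have hsym : (projMat W).toEuclideanLin.IsSymmetric := by
    have heq : (projMat W).toEuclideanLin =
        ((W.map (dimExpEqv n).toLinearMap).subtypeL.comp
          (Submodule.orthogonalProjectionOnto (W.map (dimExpEqv n).toLinearMap)) : _ →ₗ[ℂ] _) := by
      apply LinearMap.ext
      intro v
      have := projMat_mulVec W ((dimExpEqv n).symm v)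
      simp only [Matrix.toEuclideanLin_apply]
      simpa using congrArg (dimExpEqv n) this
    rw [heq]
    exact Submodule.starProjection_isSymmetric (W.map (dimExpEqv n).toLinearMap)
  exact Matrix.isHermitian_iff_isSymmetric.mpr hsym

lemma projMat_trace (W : Submodule ℂ (Fin n → ℂ)) :
    (projMat W).trace = (finrank ℂ W : ℂ) := by
  have h := (projMat_isProj W).trace
  rw [LinearMap.trace_eq_matrix_trace ℂ (Pi.basisFun ℂ (Fin n)),
    LinearMap.toMatrix_eq_toMatrix'] at h
  rw [← h]
  congr 1
  exact (LinearMap.toMatrix'_toLin' (projMat W)).symm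

lemma trace_mul_conjTranspose_re_nonneg (M : Matrix (Fin n) (Fin n) ℂ) :
    0 ≤ (M * Mᴴ).trace.re := by
  classical
  have : (M * Mᴴ).trace = ∑ i, ∑ j, M i j * star (M i j) := by
    simp [Matrix.trace, Matrix.mul_apply, Matrix.diag, Matrix.conjTranspose_apply]
  rw [this]
  rw [Complex.re_sum]
  apply Finset.sum_nonneg
  intro i _
  rw [Complex.re_sum]
  apply Finset.sum_nonneg
  intro j _
  simp only [Complex.star_def, Complex.mul_conj]
  simp [Complex.normSq_nonneg]

end ProjAux

set_option maxHeartbeats 1000000 in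
/-- If `ρ : G → U(n)` is an irreducible unitary representation, `S ⊆ G` finite, and
`κ > 0` is such that for every nonzero traceless matrix `T` some `s ∈ S` moves `T`
by at least `κ‖T‖` in the Hilbert–Schmidt norm under the adjoint action, then `ℂⁿ`
is a `(κ²/12)`-dimension expander for `{ρ(s)}_{s ∈ S}`. -/

theorem dimension_expander_of_adjoint_kazhdan
    (G : Type*) [Group G] (S : Finset G) (n : ℕ) (hn : 0 < n)
    (ρ : G →* Matrix.unitaryGroup (Fin n) ℂ)
    (hirred : ∀ U : Submodule ℂ (Fin n → ℂ),
      (∀ g : G, U.map ((ρ g : Matrix (Fin n) (Fin n) ℂ)).mulVecLin ≤ U) → U = ⊥ ∨ U = ⊤)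
    (κ : ℝ) (hκ : 0 < κ)
    (hka : ∀ T : Matrix (Fin n) (Fin n) ℂ, T.trace = 0 → T ≠ 0 →
      ∃ s ∈ S,
        Real.sqrt ((((ρ s : Matrix (Fin n) (Fin n) ℂ) * T
              * (((ρ s)⁻¹ : Matrix.unitaryGroup (Fin n) ℂ) : Matrix (Fin n) (Fin n) ℂ) - T)
            * ((ρ s : Matrix (Fin n) (Fin n) ℂ) * T
              * (((ρ s)⁻¹ : Matrix.unitaryGroup (Fin n) ℂ) : Matrix (Fin n) (Fin n) ℂ) - T)ᴴ).trace.re)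
          ≥ κ * Real.sqrt ((T * Tᴴ).trace.re)) :
    ∀ W : Submodule ℂ (Fin n → ℂ), (finrank ℂ W : ℝ) ≤ (n : ℝ) / 2 →
      ((finrank ℂ ↥(W ⊔ ⨆ s ∈ S, W.map ((ρ s : Matrix (Fin n) (Fin n) ℂ)).mulVecLin)) : ℝ)
        ≥ (1 + κ ^ 2 / 12) * finrank ℂ W := by
  intro W hW
  by_contra hcon
  push_neg at hcon
  set B : Submodule ℂ (Fin n → ℂ) :=
    W ⊔ ⨆ s ∈ S, W.map ((ρ s : Matrix (Fin n) (Fin n) ℂ)).mulVecLin with hB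
  set d : ℕ := finrank ℂ W with hd
  have hn' : (0 : ℝ) < n := by exact_mod_cast hn
  have hd0 : 0 < (d : ℝ) := by
    rcases Nat.eq_zero_or_pos d with h0 | h0
    · exfalso
      rw [h0] at hcon
      push_cast at hcon
      have : (0 : ℝ) ≤ (finrank ℂ ↥B : ℝ) := Nat.cast_nonneg _
      nlinarith
    · exact_mod_cast h0
  set c : ℝ := (d : ℝ) / n with hcdef
  have hc2 : c ≤ 1 / 2 := by
    rw [hcdef, div_le_iff₀ hn']; linarith
  have hc0 : 0 ≤ c := by positivity
  have hcn : c * n = (d : ℝ) := div_mul_cancel₀ _ (ne_of_gt hn')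
  have hcnC : (c : ℂ) * (n : ℂ) = (d : ℂ) := by exact_mod_cast hcn
  set P : Matrix (Fin n) (Fin n) ℂ := projMat W with hP
  have hPidem : P * P = P := projMat_idem W
  have hPherm : Pᴴ = P := projMat_herm W
  have hPtr : P.trace = (d : ℂ) := projMat_trace W
  have hPfix : ∀ x ∈ W, P *ᵥ x = x := fun x hx => projMat_fix W hx
  have hPmem : ∀ x, P *ᵥ x ∈ W := projMat_mem W
  set T : Matrix (Fin n) (Fin n) ℂ := P - (c : ℂ) • 1 with hT
  have hTtr : T.trace = 0 := by
    rw [hT, Matrix.trace_sub, Matrix.trace_smul, Matrix.trace_one, hPtr, smul_eq_mul]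
    simp only [Fintype.card_fin]
    rw [hcnC, sub_self]
  have hT0 : T ≠ 0 := by
    intro h0
    have hWbot : W ≠ ⊥ := by
      intro hbot
      rw [hd, hbot, finrank_bot] at hd0
      norm_num at hd0
    obtain ⟨w, hwW, hw0⟩ := Submodule.exists_mem_ne_zero_of_ne_bot hWbot
    have h1 : T *ᵥ w = (1 - (c : ℂ)) • w := by
      rw [hT, Matrix.sub_mulVec, hPfix w hwW, Matrix.smul_mulVec, Matrix.one_mulVec,
        sub_smul, one_smul]
    rw [h0] at h1
    have h1c : (1 : ℂ) - (c : ℂ) ≠ 0 := by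
      intro h
      have := congrArg Complex.re h
      simp at this
      linarith
    simp only [Matrix.zero_mulVec] at h1
    exact hw0 ((smul_eq_zero.mp h1.symm).resolve_left h1c)
  obtain ⟨s, hsS, hineq⟩ := hka T hTtr hT0
  set u : Matrix (Fin n) (Fin n) ℂ := (ρ s : Matrix (Fin n) (Fin n) ℂ) with hu
  have hvcoe : (((ρ s)⁻¹ : Matrix.unitaryGroup (Fin n) ℂ) : Matrix (Fin n) (Fin n) ℂ) = uᴴ := by
    rw [hu, ← Matrix.star_eq_conjTranspose]
    rfl
  rw [hvcoe] at hineq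
  have huv : u * uᴴ = 1 := by
    rw [hu, ← Matrix.star_eq_conjTranspose]
    have h' := congrArg (fun A : Matrix.unitaryGroup (Fin n) ℂ =>
      (A : Matrix (Fin n) (Fin n) ℂ)) (Unitary.mul_star_self (ρ s))
    simpa using h'
  have hvu : uᴴ * u = 1 := by
    rw [hu, ← Matrix.star_eq_conjTranspose]
    have h' := congrArg (fun A : Matrix.unitaryGroup (Fin n) ℂ =>
      (A : Matrix (Fin n) (Fin n) ℂ)) (Unitary.star_mul_self (ρ s))
    simpa using h'
  set Ws : Submodule ℂ (Fin n → ℂ) := W.map u.mulVecLin with hWs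
  have hWsW : Ws.map (uᴴ).mulVecLin = W := by
    rw [hWs, ← Submodule.map_comp, ← Matrix.mulVecLin_mul, hvu, Matrix.mulVecLin_one,
      Submodule.map_id]
  have hWsd : finrank ℂ Ws = d := by
    apply le_antisymm
    · rw [hWs, hd]; exact Submodule.finrank_map_le _ _
    · calc d = finrank ℂ (Ws.map (uᴴ).mulVecLin) := by rw [hWsW, hd]
        _ ≤ finrank ℂ Ws := Submodule.finrank_map_le _ _
  set Q : Matrix (Fin n) (Fin n) ℂ := u * P * uᴴ with hQ
  have hQmem : ∀ x, Q *ᵥ x ∈ Ws := by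
    intro x
    rw [hQ, ← Matrix.mulVec_mulVec, ← Matrix.mulVec_mulVec]
    exact ⟨P *ᵥ uᴴ *ᵥ x, hPmem _, by simp [Matrix.mulVecLin_apply]⟩
  have hQfix : ∀ x ∈ Ws, Q *ᵥ x = x := by
    rintro x ⟨w, hw, rfl⟩
    simp only [Matrix.mulVecLin_apply]
    rw [hQ, Matrix.mulVec_mulVec, mul_assoc (u * P) uᴴ u, hvu, mul_one, ← Matrix.mulVec_mulVec,
      hPfix w hw]
  have hQherm : Qᴴ = Q := by
    rw [hQ, Matrix.conjTranspose_mul, Matrix.conjTranspose_mul, hPherm,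
      Matrix.conjTranspose_conjTranspose, mul_assoc]
  have hQidem : Q * Q = Q := by
    apply matrix_eq_of_mulVec
    intro x
    rw [← Matrix.mulVec_mulVec]
    exact hQfix _ (hQmem x)
  have hQtr : Q.trace = (d : ℂ) := by
    rw [hQ, Matrix.trace_mul_cycle, hvu, one_mul, hPtr]
  -- the difference matrix
  have hdiff : u * T * uᴴ - T = Q - P := by
    have h1 : u * ((c : ℂ) • (1 : Matrix (Fin n) (Fin n) ℂ)) * uᴴ = (c : ℂ) • 1 := by
      rw [Matrix.mul_smul, Matrix.smul_mul, mul_one, huv]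
    rw [hT, Matrix.mul_sub, Matrix.sub_mul, h1, hQ]
    abel
  rw [hdiff] at hineq
  -- the intersection and its projection
  set R : Matrix (Fin n) (Fin n) ℂ := projMat (W ⊓ Ws) with hR
  have hRidem : R * R = R := projMat_idem _
  have hRherm : Rᴴ = R := projMat_herm _
  have hRtr : R.trace = (finrank ℂ ↥(W ⊓ Ws) : ℂ) := projMat_trace _
  have hPR : P * R = R := projMat_mul_of_le inf_le_left
  have hQR : Q * R = R := by
    apply matrix_eq_of_mulVec
    intro x
    rw [← Matrix.mulVec_mulVec]
    exact hQfix _ ((inf_le_right : W ⊓ Ws ≤ Ws) (projMat_mem (W ⊓ Ws) x))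
  set A : Matrix (Fin n) (Fin n) ℂ := P * Q with hA
  have hAH : Aᴴ = Q * P := by rw [hA, Matrix.conjTranspose_mul, hQherm, hPherm]
  have hAR : A * R = R := by rw [hA, mul_assoc, hQR, hPR]
  have hRA : R * Aᴴ = R := by
    have := congrArg Matrix.conjTranspose hAR
    rwa [Matrix.conjTranspose_mul, hRherm] at this
  have hdecomp : A * Aᴴ = R + A * (1 - R) * (A * (1 - R))ᴴ := by
    have h2 : ((1 : Matrix (Fin n) (Fin n) ℂ) - R) * (1 - R) = 1 - R := by
      calc ((1 : Matrix (Fin n) (Fin n) ℂ) - R) * (1 - R) = 1 - R - R + R * R := by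
            noncomm_ring
        _ = 1 - R := by rw [hRidem]; abel
    have h3 : A * (1 - R) * (A * (1 - R))ᴴ = A * Aᴴ - R := by
      rw [Matrix.conjTranspose_mul, Matrix.conjTranspose_sub, Matrix.conjTranspose_one, hRherm]
      calc A * (1 - R) * ((1 - R) * Aᴴ) = A * ((1 - R) * (1 - R)) * Aᴴ := by
            noncomm_ring
        _ = A * (1 - R) * Aᴴ := by rw [h2]
        _ = A * Aᴴ - A * R * Aᴴ := by noncomm_ring
        _ = A * Aᴴ - R := by rw [hAR, hRA]
    rw [h3]
    abel
  have htrA : ((finrank ℂ ↥(W ⊓ Ws) : ℝ)) ≤ (A * Aᴴ).trace.re := by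
    have hnn := trace_mul_conjTranspose_re_nonneg (A * (1 - R))
    rw [hdecomp, Matrix.trace_add, Complex.add_re, hRtr]
    simp only [Complex.natCast_re]
    linarith
  have htrPQ : (P * Q).trace = (A * Aᴴ).trace := by
    have e1 : A * Aᴴ = P * Q * P := by
      rw [hAH, hA]
      calc P * Q * (Q * P) = P * (Q * Q) * P := by noncomm_ring
        _ = P * Q * P := by rw [hQidem]
    rw [e1, Matrix.trace_mul_cycle P Q P, hPidem]
  -- trace of (Q-P)(Q-P)ᴴ
  have key1 : ((Q - P) * (Q - P)ᴴ).trace = 2 * ((d : ℂ) - (P * Q).trace) := by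
    rw [Matrix.conjTranspose_sub, hQherm, hPherm, Matrix.sub_mul, Matrix.mul_sub,
      Matrix.mul_sub, Matrix.trace_sub, Matrix.trace_sub, Matrix.trace_sub, hQidem, hPidem,
      hQtr, hPtr, Matrix.trace_mul_comm Q P]
    ring
  -- trace of T Tᴴ
  have hTherm : Tᴴ = T := by
    rw [hT, Matrix.conjTranspose_sub, hPherm, Matrix.conjTranspose_smul,
      Matrix.conjTranspose_one, Complex.star_def, Complex.conj_ofReal]
  have hTT : T * T = P - (2 * (c : ℂ)) • P + ((c : ℂ) * (c : ℂ)) • 1 := by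
    rw [hT]
    calc (P - (c : ℂ) • 1) * (P - (c : ℂ) • 1)
        = P * P - (c : ℂ) • (P * 1) - (c : ℂ) • (1 * P) + ((c : ℂ) * (c : ℂ)) • (1 * 1) := by
          rw [Matrix.sub_mul, Matrix.mul_sub, Matrix.mul_sub, Matrix.mul_smul,
            Matrix.smul_mul, Matrix.smul_mul, Matrix.mul_smul, smul_smul]
          abel
      _ = P - (2 * (c : ℂ)) • P + ((c : ℂ) * (c : ℂ)) • 1 := by
          rw [hPidem, mul_one, one_mul, mul_one, two_mul, add_smul]
          abel
  have hTb : (T * Tᴴ).trace = ((d : ℝ) - c * d : ℝ) := by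
    rw [hTherm, hTT, Matrix.trace_add, Matrix.trace_sub, Matrix.trace_smul, Matrix.trace_smul,
      Matrix.trace_one, hPtr]
    simp only [Fintype.card_fin, smul_eq_mul]
    push_cast
    linear_combination (c : ℂ) * hcnC
  have hTbre : (T * Tᴴ).trace.re = (d : ℝ) - c * d := by
    rw [hTb, Complex.ofReal_re]
  rw [hTbre] at hineq
  have hb0 : (0 : ℝ) ≤ (d : ℝ) - c * d := by nlinarith
  have hx0 : 0 ≤ ((Q - P) * (Q - P)ᴴ).trace.re := trace_mul_conjTranspose_re_nonneg _
  have hx : κ ^ 2 * ((d : ℝ) - c * d) ≤ ((Q - P) * (Q - P)ᴴ).trace.re := by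
    calc κ ^ 2 * ((d : ℝ) - c * d) = (κ * Real.sqrt ((d : ℝ) - c * d)) ^ 2 := by
          rw [mul_pow, Real.sq_sqrt hb0]
      _ ≤ Real.sqrt (((Q - P) * (Q - P)ᴴ).trace.re) ^ 2 :=
          pow_le_pow_left₀ (mul_nonneg hκ.le (Real.sqrt_nonneg _)) hineq 2
      _ = ((Q - P) * (Q - P)ᴴ).trace.re := Real.sq_sqrt hx0
  have hxeq : ((Q - P) * (Q - P)ᴴ).trace.re = 2 * ((d : ℝ) - (P * Q).trace.re) := by
    rw [key1]
    simp [Complex.mul_re, Complex.sub_re, Complex.sub_im, Complex.natCast_re, Complex.natCast_im]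
  -- dimension counting
  have hsup : finrank ℂ ↥(W ⊔ Ws) + finrank ℂ ↥(W ⊓ Ws) = d + d := by
    rw [Submodule.finrank_sup_add_finrank_inf_eq, hWsd, hd]
  have hle : finrank ℂ ↥(W ⊔ Ws) ≤ finrank ℂ ↥B := by
    apply Submodule.finrank_mono
    rw [hB]
    refine sup_le le_sup_left (le_trans ?_ le_sup_right)
    rw [hWs, hu]
    exact le_biSup (fun g : G => W.map ((ρ g : Matrix (Fin n) (Fin n) ℂ)).mulVecLin) hsS
  have hm : (1 - κ ^ 2 / 12) * (d : ℝ) < (finrank ℂ ↥(W ⊓ Ws) : ℝ) := by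
    have h1 : (finrank ℂ ↥(W ⊔ Ws) : ℝ) + (finrank ℂ ↥(W ⊓ Ws) : ℝ) = (d : ℝ) + d := by
      exact_mod_cast hsup
    have h2 : (finrank ℂ ↥(W ⊔ Ws) : ℝ) ≤ (finrank ℂ ↥B : ℝ) := by exact_mod_cast hle
    nlinarith
  have hPQre : (finrank ℂ ↥(W ⊓ Ws) : ℝ) ≤ (P * Q).trace.re := by
    rw [htrPQ]; exact htrA
  -- final contradiction
  have hfin1 : κ ^ 2 * ((d : ℝ) / 2) ≤ κ ^ 2 * ((d : ℝ) - c * d) := by nlinarith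
  have hk2 : (0 : ℝ) < κ ^ 2 * d := by positivity
  nlinarith [hx, hxeq, hm, hPQre, hfin1]
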